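/- arXiv:0902.0585 — 4 statements merged into one kernel-verified Lean document; each statement's English description precedes it below -/
import Mathlib

section
/- The logistic tail distribution function F*(x) = 1/(1+e^x) is a fixed point of the operator T defined by (TF)(x) = exp(-∫_{-x}^{∞} F(t) dt); that is, for all real x, exp(-∫_{-x}^{∞} 1/(1+e^t) dt) = 1/(1+e^x). -/
open MeasureTheory Set Filter

/-- The logistic tail distribution function. -/
noncomputable def Fstar (x : ℝ) : ℝ := 1 / (1 + Real.exp x)

/-- The BP operator `T`: `(TF)(x) = exp (-∫_{-x}^∞ F)`, with the convention `exp (-∞) = 0`. -/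
noncomputable def Tmap (F : ℝ → ℝ) (x : ℝ) : ℝ :=
  if (∫⁻ u in Ioi (-x), ENNReal.ofReal (F u)) = ⊤ then 0
  else Real.exp (-((∫⁻ u in Ioi (-x), ENNReal.ofReal (F u)).toReal))

/-- The hat transform of a tail distribution function. -/
noncomputable def hatT (F : ℝ → ℝ) (x : ℝ) : ℝ := x + Real.log (F x / (1 - F x))

lemma hderiv : ∀ t : ℝ, HasDerivAt (fun t => -Real.log (1 + Real.exp (-t))) (Fstar t) t := by
  intro t
  have h1 : (0:ℝ) < 1 + Real.exp (-t) := by positivity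
  have h := ((Real.hasDerivAt_exp (-t)).comp t ((hasDerivAt_id t).neg)).const_add 1
  have h2 := (h.log h1.ne').neg
  have e : Fstar t = -(Real.exp (-t) * -1 / (1 + (Real.exp ∘ Neg.neg) t)) := by
    simp only [Function.comp_apply, Fstar, Real.exp_neg]
    field_simp
    ring
  rw [e]; exact h2

lemma hlim : Tendsto (fun t => -Real.log (1 + Real.exp (-t))) atTop (nhds 0) := by
  have : Tendsto (fun t : ℝ => 1 + Real.exp (-t)) atTop (nhds 1) := by
    simpa using (Real.tendsto_exp_comp_nhds_zero.mpr tendsto_neg_atTop_atBot).const_add 1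
  simpa using ((Real.continuousAt_log one_ne_zero).tendsto.comp this).neg

lemma integral_Fstar (x : ℝ) : ∫ t in Ioi (-x), Fstar t = Real.log (1 + Real.exp x) := by
  have := integral_Ioi_of_hasDerivAt_of_nonneg' (a := -x)
    (g := fun t => -Real.log (1 + Real.exp (-t))) (g' := Fstar)
    (fun t _ => hderiv t) (fun t _ => by
      have : (0:ℝ) < 1 + Real.exp t := by positivity
      simp [Fstar]; positivity) hlim
  rw [this]; simp

lemma integrable_Fstar (x : ℝ) : IntegrableOn Fstar (Ioi (-x)) := by
  exact integrableOn_Ioi_deriv_of_nonneg' (fun t _ => hderiv t) (fun t _ => by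
      have : (0:ℝ) < 1 + Real.exp t := by positivity
      simp [Fstar]; positivity) hlim

theorem logistic_fixed_point : ∀ x : ℝ, Tmap Fstar x = Fstar x := by
  intro x
  have hnn : 0 ≤ᵐ[Measure.restrict volume (Ioi (-x))] Fstar := by
    filter_upwards with t
    have : (0:ℝ) < 1 + Real.exp t := by positivity
    simp [Fstar]; positivity
  have key : (∫⁻ u in Ioi (-x), ENNReal.ofReal (Fstar u)) =
      ENNReal.ofReal (Real.log (1 + Real.exp x)) := by
    rw [← ofReal_integral_eq_lintegral_ofReal (integrable_Fstar x) hnn, integral_Fstar]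
  have hpos : (0:ℝ) < 1 + Real.exp x := by positivity
  have hlog : 0 ≤ Real.log (1 + Real.exp x) := Real.log_nonneg (by linarith [Real.exp_pos x])
  rw [Tmap, key, if_neg ENNReal.ofReal_ne_top, ENNReal.toReal_ofReal hlog,
    Real.exp_neg, Real.exp_log hpos, Fstar, one_div]
end

section
/- Every shift of the logistic distribution is a fixed point of T²: for any t ∈ ℝ, T²(θ_t F*) = θ_t F*, where F*(x) = 1/(1+e^x). -/
open MeasureTheory Set Filter

lemma Fstar_pos (x : ℝ) : 0 < Fstar x := by
  unfold Fstar; positivity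

lemma Fstar_deriv (s u : ℝ) :
    HasDerivAt (fun u => -Real.log (1 + Real.exp (s - u))) (Fstar (u - s)) u := by
  have h1 : HasDerivAt (fun u : ℝ => s - u) (-1) u := by
    simpa using (hasDerivAt_id u).const_sub s
  have h2 : HasDerivAt (fun u : ℝ => Real.exp (s - u)) (Real.exp (s - u) * (-1)) u :=
    (Real.hasDerivAt_exp _).comp u h1
  have h3 : HasDerivAt (fun u : ℝ => 1 + Real.exp (s - u)) (Real.exp (s - u) * (-1)) u :=
    h2.const_add 1
  have hpos : (0:ℝ) < 1 + Real.exp (s - u) := by positivity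
  have h4 := (h3.log hpos.ne').neg
  refine h4.congr_deriv ?_
  symm
  have hmul : Real.exp (s - u) * Real.exp (u - s) = 1 := by
    rw [← Real.exp_add]; simp
  unfold Fstar
  have hpos2 : (0:ℝ) < 1 + Real.exp (u - s) := by positivity
  field_simp
  nlinarith [hmul]

lemma Fstar_integrableOn (s a : ℝ) :
    IntegrableOn (fun u => Fstar (u - s)) (Ioi a) := by
  have hexp : IntegrableOn (fun u : ℝ => Real.exp s * Real.exp (-1 * u)) (Ioi a) :=
    (exp_neg_integrableOn_Ioi a one_pos).const_mul (Real.exp s)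
  refine Integrable.mono hexp ?_ ?_
  · apply Continuous.aestronglyMeasurable
    have : Continuous Fstar := by
      unfold Fstar
      exact continuous_const.div (by continuity) (fun x => by positivity)
    exact this.comp (by continuity)
  · filter_upwards with u
    have h1 : 0 < Fstar (u - s) := Fstar_pos _
    have h2 : Fstar (u - s) ≤ Real.exp (s - u) := by
      unfold Fstar
      rw [div_le_iff₀ (by positivity)]
      have hmul : Real.exp (s - u) * Real.exp (u - s) = 1 := by
        rw [← Real.exp_add]; simp
      nlinarith [Real.exp_pos (s - u)]
    rw [Real.norm_eq_abs, Real.norm_eq_abs, abs_of_pos h1, abs_of_pos (by positivity : (0:ℝ) < Real.exp s * Real.exp (-1 * u))]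
    calc Fstar (u - s) ≤ Real.exp (s - u) := h2
      _ = Real.exp s * Real.exp (-1 * u) := by rw [← Real.exp_add]; ring_nf

lemma Fstar_integral (s a : ℝ) :
    ∫ u in Ioi a, Fstar (u - s) = Real.log (1 + Real.exp (s - a)) := by
  have := integral_Ioi_of_hasDerivAt_of_tendsto
    (f := fun u => -Real.log (1 + Real.exp (s - u))) (f' := fun u => Fstar (u - s)) (a := a)
    (m := 0) ?_ (fun u _ => Fstar_deriv s u) (Fstar_integrableOn s a) ?_
  · rw [this]; simp
  · exact ((Fstar_deriv s a).continuousAt).continuousWithinAt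
  · have h1 : Tendsto (fun u : ℝ => Real.exp (s - u)) atTop (nhds 0) := by
      have : Tendsto (fun u : ℝ => s - u) atTop atBot := by
        simpa [sub_eq_add_neg] using tendsto_atBot_add_const_left atTop s tendsto_neg_atTop_atBot
      exact Real.tendsto_exp_atBot.comp this
    have h2 : Tendsto (fun u : ℝ => -Real.log (1 + Real.exp (s - u))) atTop
        (nhds (-Real.log (1 + 0))) :=
      (((Real.continuousAt_log (by norm_num)).tendsto).comp (tendsto_const_nhds.add h1)).neg
    simpa using h2

lemma Tmap_shift (s x : ℝ) : Tmap (fun y => Fstar (y - s)) x = Fstar (x + s) := by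
  have hint := Fstar_integrableOn s (-x)
  have hnn : 0 ≤ᵐ[Measure.restrict volume (Ioi (-x))] fun u => Fstar (u - s) :=
    Filter.Eventually.of_forall fun u => (Fstar_pos _).le
  have key : (∫⁻ u in Ioi (-x), ENNReal.ofReal (Fstar (u - s)))
      = ENNReal.ofReal (Real.log (1 + Real.exp (s + x))) := by
    rw [← ofReal_integral_eq_lintegral_ofReal hint hnn, Fstar_integral]
    ring_nf
  unfold Tmap
  rw [key]
  have hge : (1:ℝ) ≤ 1 + Real.exp (s + x) := by
    have := Real.exp_pos (s + x); linarith
  have hlognn : 0 ≤ Real.log (1 + Real.exp (s + x)) := Real.log_nonneg hge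
  rw [if_neg (by simp), ENNReal.toReal_ofReal hlognn]
  rw [Real.exp_neg, Real.exp_log (by linarith)]
  unfold Fstar
  rw [one_div]
  ring_nf

theorem Tmap_sq_fixed_shifted_logistic (t : ℝ) :
    ∀ x, Tmap (Tmap (fun y => Fstar (y - t))) x = Fstar (x - t) := by
  intro x
  have h1 : Tmap (fun y => Fstar (y - t)) = fun y => Fstar (y - (-t)) := by
    funext y
    rw [Tmap_shift]
    ring_nf
  rw [h1, Tmap_shift]
  ring_nf
end

section
/- Let F : ℝ → [0,1] be non-increasing, not identically 0, with ∫_0^∞ F(t) dt < ∞. Then the transform of T⁴F, namely x ↦ x + ln(T⁴F(x)/(1 - T⁴F(x))), is bounded on ℝ. Equivalently, there exists M ≥ 0 with θ_{-M}F* ≤ T⁴F ≤ θ_M F*. -/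
open MeasureTheory Set Filter
open scoped ENNReal Topology

/-! ### Auxiliary material -/

/-- The integral appearing in `Tmap`. -/
noncomputable def Ig (f : ℝ → ℝ) (x : ℝ) : ℝ≥0∞ := ∫⁻ u in Ioi (-x), ENNReal.ofReal (f u)

lemma Tmap_eq {f : ℝ → ℝ} {x : ℝ} (h : Ig f x ≠ ⊤) :
    Tmap f x = Real.exp (-(Ig f x).toReal) := if_neg h

lemma Tmap_nonneg (f : ℝ → ℝ) (x : ℝ) : 0 ≤ Tmap f x := by
  unfold Tmap; split
  · exact le_rfl
  · exact (Real.exp_pos _).le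

lemma Tmap_le_one (f : ℝ → ℝ) (x : ℝ) : Tmap f x ≤ 1 := by
  unfold Tmap; split
  · exact zero_le_one
  · exact Real.exp_le_one_iff.2 (neg_nonpos.2 ENNReal.toReal_nonneg)

lemma Ig_mono (f : ℝ → ℝ) : Monotone (Ig f) := fun x y hxy =>
  lintegral_mono_set (Ioi_subset_Ioi (neg_le_neg hxy))

lemma Tmap_anti (f : ℝ → ℝ) : Antitone (Tmap f) := by
  intro x y hxy
  by_cases hy : Ig f y = ⊤
  · rw [show Tmap f y = 0 from if_pos hy]; exact Tmap_nonneg f x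
  · have hx : Ig f x ≠ ⊤ := fun h => hy (top_le_iff.1 (h ▸ Ig_mono f hxy))
    rw [Tmap_eq hx, Tmap_eq hy]
    exact Real.exp_le_exp.2 (neg_le_neg (ENNReal.toReal_mono hy (Ig_mono f hxy)))

lemma Tmap_le_of_le {f : ℝ → ℝ} {x L : ℝ} (hL : ENNReal.ofReal L ≤ Ig f x) :
    Tmap f x ≤ Real.exp (-L) := by
  by_cases h : Ig f x = ⊤
  · rw [show Tmap f x = 0 from if_pos h]; exact (Real.exp_pos _).le
  · rw [Tmap_eq h]
    refine Real.exp_le_exp.2 (neg_le_neg ?_)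
    rcases le_or_gt L 0 with hL0 | hL0
    · exact hL0.trans ENNReal.toReal_nonneg
    · have := ENNReal.toReal_mono h hL
      rwa [ENNReal.toReal_ofReal hL0.le] at this

lemma le_Tmap_of_le {f : ℝ → ℝ} {x U : ℝ} (hU0 : 0 ≤ U) (hU : Ig f x ≤ ENNReal.ofReal U) :
    Real.exp (-U) ≤ Tmap f x := by
  have h : Ig f x ≠ ⊤ := (hU.trans_lt ENNReal.ofReal_lt_top).ne
  rw [Tmap_eq h]
  refine Real.exp_le_exp.2 (neg_le_neg ?_)
  have := ENNReal.toReal_mono ENNReal.ofReal_ne_top hU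
  rwa [ENNReal.toReal_ofReal hU0] at this

lemma one_sub_Tmap_le {f : ℝ → ℝ} {x U : ℝ} (hU0 : 0 ≤ U) (hU : Ig f x ≤ ENNReal.ofReal U) :
    1 - Tmap f x ≤ U := by
  have h : Ig f x ≠ ⊤ := (hU.trans_lt ENNReal.ofReal_lt_top).ne
  rw [Tmap_eq h]
  set H := (Ig f x).toReal with hH
  have hHU : H ≤ U := by
    have := ENNReal.toReal_mono ENNReal.ofReal_ne_top hU
    rwa [ENNReal.toReal_ofReal hU0] at this
  have := Real.add_one_le_exp (-H)
  linarith

lemma le_one_sub_Tmap {f : ℝ → ℝ} {x L B : ℝ} (hL0 : 0 ≤ L) (hB0 : 0 ≤ B)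
    (hL : ENNReal.ofReal L ≤ Ig f x) (hB : Ig f x ≤ ENNReal.ofReal B) :
    L * Real.exp (-B) ≤ 1 - Tmap f x := by
  have h : Ig f x ≠ ⊤ := (hB.trans_lt ENNReal.ofReal_lt_top).ne
  rw [Tmap_eq h]
  set H := (Ig f x).toReal with hH
  have hLH : L ≤ H := by
    have := ENNReal.toReal_mono h hL
    rwa [ENNReal.toReal_ofReal hL0] at this
  have hHB : H ≤ B := by
    have := ENNReal.toReal_mono ENNReal.ofReal_ne_top hB
    rwa [ENNReal.toReal_ofReal hB0] at this
  have h1 : H * Real.exp (-H) ≤ 1 - Real.exp (-H) := by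
    have := Real.add_one_le_exp H
    have h2 : (H + 1) * Real.exp (-H) ≤ Real.exp H * Real.exp (-H) := by
      apply mul_le_mul_of_nonneg_right this (Real.exp_pos _).le
    rw [← Real.exp_add] at h2
    simp at h2
    nlinarith [Real.exp_pos (-H)]
  calc L * Real.exp (-B) ≤ H * Real.exp (-H) := by
        apply mul_le_mul hLH (Real.exp_le_exp.2 (neg_le_neg hHB)) (Real.exp_pos _).le
          (hL0.trans hLH)
    _ ≤ 1 - Real.exp (-H) := h1

/-- Value of the improper integral of a decaying exponential. -/
lemma integral_exp_neg_rate {r : ℝ} (hr : 0 < r) (y : ℝ) :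
    ∫ u in Ioi y, Real.exp (-(r * u)) = Real.exp (-(r * y)) / r := by
  have hderiv : ∀ x ∈ Ici y, HasDerivAt (fun u => -Real.exp (-(r * u)) / r)
      (Real.exp (-(r * x))) x := by
    intro x _
    have h1 : HasDerivAt (fun u : ℝ => -(r * u)) (-r) x := by
      exact (((hasDerivAt_id x).const_mul r).neg).congr_deriv (by simp)
    have := (h1.exp).neg.div_const r
    refine this.congr_deriv ?_
    field_simp
  have hint : IntegrableOn (fun u => Real.exp (-(r * u))) (Ioi y) := by
    simpa [neg_mul] using exp_neg_integrableOn_Ioi y hr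
  have hten : Tendsto (fun u => -Real.exp (-(r * u)) / r) atTop (𝓝 0) := by
    have h0 : Tendsto (fun x : ℝ => -Real.exp (-r * x) / r) atTop (𝓝 (-0 / r)) := by
      refine Tendsto.div_const (Tendsto.neg ?_) _
      exact Real.tendsto_exp_atBot.comp (tendsto_id.const_mul_atTop_of_neg (neg_neg_iff_pos.2 hr))
    simpa [neg_mul] using h0
  have := integral_Ioi_of_hasDerivAt_of_tendsto' hderiv hint hten
  rw [this]; ring


/-- Upper bound for the lintegral of a function dominated by a decaying exponential. -/
lemma lint_exp_le {f : ℝ → ℝ} {C r : ℝ} (hr : 0 < r) (hC : 0 ≤ C)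
    (hf : ∀ u, f u ≤ C * Real.exp (-(r * u))) (y : ℝ) :
    (∫⁻ u in Ioi y, ENNReal.ofReal (f u)) ≤ ENNReal.ofReal (C / r * Real.exp (-(r * y))) := by
  have hint : Integrable (fun u => C * Real.exp (-(r * u))) (volume.restrict (Ioi y)) := by
    have : IntegrableOn (fun u => Real.exp (-(r * u))) (Ioi y) := by
      simpa [neg_mul] using exp_neg_integrableOn_Ioi y hr
    exact this.const_mul C
  calc (∫⁻ u in Ioi y, ENNReal.ofReal (f u))
      ≤ ∫⁻ u in Ioi y, ENNReal.ofReal (C * Real.exp (-(r * u))) :=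
        lintegral_mono fun u => ENNReal.ofReal_le_ofReal (hf u)
    _ = ENNReal.ofReal (∫ u in Ioi y, C * Real.exp (-(r * u))) := by
        rw [ofReal_integral_eq_lintegral_ofReal hint]
        exact Eventually.of_forall fun u => by positivity
    _ = ENNReal.ofReal (C / r * Real.exp (-(r * y))) := by
        rw [integral_const_mul, integral_exp_neg_rate hr]
        congr 1; ring

/-- Lower bound for the lintegral of a function dominated below by `c * exp (-u)` on `Ioi y`. -/
lemma lint_exp_ge {f : ℝ → ℝ} {c : ℝ} (hc : 0 ≤ c) {y : ℝ}
    (hf : ∀ u ∈ Ioi y, c * Real.exp (-u) ≤ f u) :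
    ENNReal.ofReal (c * Real.exp (-y)) ≤ ∫⁻ u in Ioi y, ENNReal.ofReal (f u) := by
  have hint : Integrable (fun u => c * Real.exp (-u)) (volume.restrict (Ioi y)) := by
    have : IntegrableOn (fun u => Real.exp (-u)) (Ioi y) := by
      simpa [neg_mul, one_mul] using exp_neg_integrableOn_Ioi y one_pos
    exact this.const_mul c
  calc ENNReal.ofReal (c * Real.exp (-y))
      = ENNReal.ofReal (∫ u in Ioi y, c * Real.exp (-u)) := by
        rw [integral_const_mul, integral_exp_neg_Ioi]
    _ = ∫⁻ u in Ioi y, ENNReal.ofReal (c * Real.exp (-u)) := by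
        rw [ofReal_integral_eq_lintegral_ofReal hint]
        exact Eventually.of_forall fun u => by positivity
    _ ≤ ∫⁻ u in Ioi y, ENNReal.ofReal (f u) :=
        setLIntegral_mono' measurableSet_Ioi fun u hu =>
          ENNReal.ofReal_le_ofReal (hf u hu)

/-- Lower bound for `Ig` from a constant lower bound on a left half-line. -/
lemma Ig_ge_const {f : ℝ → ℝ} {m b x : ℝ} (hm : 0 ≤ m) (hfb : ∀ v ≤ b, m ≤ f v)
    (hx : -x ≤ b) : ENNReal.ofReal (m * (x + b)) ≤ Ig f x := by
  have h1 : ENNReal.ofReal (m * (x + b)) = ∫⁻ _ in Ioc (-x) b, ENNReal.ofReal m := by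
    rw [setLIntegral_const, Real.volume_Ioc, ← ENNReal.ofReal_mul hm]
    congr 1; ring
  rw [h1]
  calc ∫⁻ _ in Ioc (-x) b, ENNReal.ofReal m
      ≤ ∫⁻ u in Ioc (-x) b, ENNReal.ofReal (f u) :=
        setLIntegral_mono' measurableSet_Ioc fun u hu =>
          ENNReal.ofReal_le_ofReal (hfb u hu.2)
    _ ≤ Ig f x := lintegral_mono_set Ioc_subset_Ioi_self

/-- Upper bound for `Ig` by a linear function, given a bound on the right tail. -/
lemma Ig_le_add {f : ℝ → ℝ} (h1 : ∀ u, f u ≤ 1) {K : ℝ} (hK0 : 0 ≤ K)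
    (hK : (∫⁻ u in Ioi (0:ℝ), ENNReal.ofReal (f u)) ≤ ENNReal.ofReal K) {x : ℝ} (hx : 0 ≤ x) :
    Ig f x ≤ ENNReal.ofReal (x + K) := by
  have hsplit : Ioi (-x) = Ioc (-x) 0 ∪ Ioi (0:ℝ) := (Ioc_union_Ioi_eq_Ioi (by linarith)).symm
  have hIoc : (∫⁻ u in Ioc (-x) 0, ENNReal.ofReal (f u)) ≤ ENNReal.ofReal x := by
    calc (∫⁻ u in Ioc (-x) 0, ENNReal.ofReal (f u))
        ≤ ∫⁻ _ in Ioc (-x) (0:ℝ), 1 :=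
          setLIntegral_mono' measurableSet_Ioc fun u _ => ENNReal.ofReal_le_one.2 (h1 u)
      _ = ENNReal.ofReal x := by rw [setLIntegral_one, Real.volume_Ioc]; norm_num
  calc Ig f x = ∫⁻ u in Ioc (-x) 0 ∪ Ioi (0:ℝ), ENNReal.ofReal (f u) := by rw [Ig, hsplit]
    _ ≤ (∫⁻ u in Ioc (-x) 0, ENNReal.ofReal (f u)) + ∫⁻ u in Ioi (0:ℝ), ENNReal.ofReal (f u) :=
        lintegral_union_le _ _ _
    _ ≤ ENNReal.ofReal x + ENNReal.ofReal K := add_le_add hIoc hK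
    _ = ENNReal.ofReal (x + K) := (ENNReal.ofReal_add hx hK0).symm

/-- `Tmap f` decays exponentially if `f` is bounded below on a left half-line. -/
lemma Tmap_exp_bound {f : ℝ → ℝ} {m b : ℝ} (hm : 0 ≤ m) (hfb : ∀ v ≤ b, m ≤ f v) :
    ∀ x, Tmap f x ≤ Real.exp (-(m * (x + b))) := by
  intro x
  rcases le_or_gt (x + b) 0 with h | h
  · calc Tmap f x ≤ 1 := Tmap_le_one f x
      _ ≤ Real.exp (-(m * (x + b))) := by
        rw [← Real.exp_zero]
        exact Real.exp_le_exp.2 (by nlinarith)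
  · exact Tmap_le_of_le (Ig_ge_const hm hfb (by linarith))

/-- Interval integral of `exp (r*v)`. -/
lemma integral_exp_mul {r : ℝ} (hr : r ≠ 0) (a b : ℝ) :
    ∫ v in a..b, Real.exp (r * v) = (Real.exp (r * b) - Real.exp (r * a)) / r := by
  have hderiv : ∀ x ∈ uIcc a b, HasDerivAt (fun v => Real.exp (r * v) / r)
      (Real.exp (r * x)) x := by
    intro x _
    have h1 : HasDerivAt (fun v : ℝ => r * v) r x := by
      simpa using (hasDerivAt_id x).const_mul r
    have := (h1.exp).div_const r
    refine this.congr_deriv ?_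
    field_simp
  have hint : IntervalIntegrable (fun v => Real.exp (r * v)) volume a b :=
    (Real.continuous_exp.comp (continuous_const.mul continuous_id)).intervalIntegrable a b
  rw [intervalIntegral.integral_eq_sub_of_hasDerivAt hderiv hint]
  ring

/-- If `f ≥ 1 - C e^{r v}` everywhere then `Ig f x ≥ x - C/r` for `x ≥ 0`. -/
lemma Ig_ge_linear {f : ℝ → ℝ} {C r : ℝ} (hr : 0 < r) (hC : 0 ≤ C)
    (hf : ∀ v, 1 - C * Real.exp (r * v) ≤ f v) {x : ℝ} (hx : 0 ≤ x) :
    ENNReal.ofReal (x - C / r) ≤ Ig f x := by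
  set h : ℝ → ℝ := fun v => 1 - C * Real.exp (r * v) with hh
  set hp : ℝ → ℝ := fun v => max (h v) 0 with hhp
  have hcont : Continuous h := by
    fun_prop
  have hint : Integrable h (volume.restrict (Ioc (-x) 0)) :=
    (hcont.integrableOn_Ioc)
  have hintp : Integrable hp (volume.restrict (Ioc (-x) 0)) := hint.pos_part
  -- value of the integral of h
  have hval : ∫ v in Ioc (-x) 0, h v = x - C * ((1 - Real.exp (r * (-x))) / r) := by
    rw [← intervalIntegral.integral_of_le (by linarith : -x ≤ (0:ℝ))]
    rw [intervalIntegral.integral_sub intervalIntegrable_const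
      ((by fun_prop : Continuous (fun v : ℝ => C * Real.exp (r * v))).intervalIntegrable _ _)]
    rw [intervalIntegral.integral_const]
    rw [intervalIntegral.integral_const_mul, integral_exp_mul hr.ne']
    simp only [mul_zero, Real.exp_zero, smul_eq_mul]
    ring
  have hple : x - C / r ≤ ∫ v in Ioc (-x) 0, hp v := by
    have h1 : ∫ v in Ioc (-x) 0, h v ≤ ∫ v in Ioc (-x) 0, hp v :=
      integral_mono hint hintp fun v => le_max_left _ _
    have h2 : x - C / r ≤ x - C * ((1 - Real.exp (r * (-x))) / r) := by
      have he : 0 ≤ Real.exp (r * (-x)) := (Real.exp_pos _).le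
      have he1 : Real.exp (r * (-x)) ≤ 1 := by
        rw [← Real.exp_zero]
        exact Real.exp_le_exp.2 (by nlinarith)
      have h3 : (1 - Real.exp (r * (-x))) / r ≤ 1 / r := by gcongr <;> linarith
      have h4 : C * ((1 - Real.exp (r * (-x))) / r) ≤ C * (1 / r) :=
        mul_le_mul_of_nonneg_left h3 hC
      have h5 : C * (1 / r) = C / r := by ring
      linarith
    linarith [hval ▸ h1]
  calc ENNReal.ofReal (x - C / r) ≤ ENNReal.ofReal (∫ v in Ioc (-x) 0, hp v) :=
        ENNReal.ofReal_le_ofReal hple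
    _ = ∫⁻ v in Ioc (-x) 0, ENNReal.ofReal (hp v) := by
        rw [ofReal_integral_eq_lintegral_ofReal hintp]
        exact Eventually.of_forall fun v => le_max_right _ _
    _ = ∫⁻ v in Ioc (-x) 0, ENNReal.ofReal (h v) := by
        apply lintegral_congr
        intro v
        rcases le_or_gt (h v) 0 with hv | hv
        · simp [hhp, ENNReal.ofReal_eq_zero.2 hv, max_eq_right hv, ENNReal.ofReal_eq_zero.2 le_rfl]
        · simp [hhp, max_eq_left hv.le]
    _ ≤ ∫⁻ v in Ioc (-x) 0, ENNReal.ofReal (f v) :=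
        setLIntegral_mono' measurableSet_Ioc fun v _ => ENNReal.ofReal_le_ofReal (hf v)
    _ ≤ Ig f x := lintegral_mono_set Ioc_subset_Ioi_self

/-- `Tmap f` decays at rate exactly 1 if `1 - f` has an exponential left tail. -/
lemma Tmap_exp_bound_one {f : ℝ → ℝ} {C r : ℝ} (hr : 0 < r) (hC : 0 ≤ C)
    (hf : ∀ v, 1 - C * Real.exp (r * v) ≤ f v) :
    ∀ x, Tmap f x ≤ Real.exp (C / r) * Real.exp (-x) := by
  intro x
  rcases le_or_gt x 0 with h | h
  · calc Tmap f x ≤ 1 := Tmap_le_one f x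
      _ ≤ Real.exp (C / r) * Real.exp (-x) := by
        rw [← Real.exp_add]
        refine Real.one_le_exp ?_
        have : 0 ≤ C / r := by positivity
        linarith
  · have := Tmap_le_of_le (Ig_ge_linear hr hC hf h.le)
    calc Tmap f x ≤ Real.exp (-(x - C / r)) := this
      _ = Real.exp (C / r) * Real.exp (-x) := by rw [← Real.exp_add]; ring_nf

lemma final_combine {g : ℝ → ℝ} {A B a a' : ℝ}
    (hA1 : 1 ≤ A) (hB1 : 1 ≤ B) (ha0 : 0 < a) (ha1 : a ≤ 1) (ha'0 : 0 < a') (ha'1 : a' ≤ 1)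
    (hg0 : ∀ x, 0 ≤ g x) (hg1 : ∀ x, g x ≤ 1) (hganti : Antitone g)
    (hup : ∀ x, g x ≤ A * Real.exp (-x))
    (hlow : ∀ x, 0 ≤ x → a * Real.exp (-x) ≤ g x)
    (h1up : ∀ v, 1 - g v ≤ B * Real.exp v)
    (h1low : ∀ v ≤ 0, a' * Real.exp v ≤ 1 - g v) :
    ∃ M : ℝ, 0 ≤ M ∧ ∀ x, Fstar (x + M) ≤ g x ∧ g x ≤ Fstar (x - M) := by
  set M := Real.log (A * B / (a * a')) with hMdef
  have hAB1 : 1 ≤ A * B := one_le_mul_of_one_le_of_one_le hA1 hB1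
  have haa' : a * a' ≤ 1 := mul_le_one₀ ha1 ha'0.le ha'1
  have hratio1 : 1 ≤ A * B / (a * a') := by
    rw [le_div_iff₀ (by positivity)]
    linarith
  have hM0 : 0 ≤ M := Real.log_nonneg hratio1
  have hEM : Real.exp M = A * B / (a * a') := Real.exp_log (by positivity)
  have hENM : Real.exp (-M) = a * a' / (A * B) := by
    rw [Real.exp_neg, hEM, inv_div]
  refine ⟨M, hM0, fun x => ?_⟩
  have hex := Real.exp_pos x
  have heM := Real.exp_pos M
  have hcancel : Real.exp (-x) * Real.exp x = 1 := by
    rw [← Real.exp_add]; simp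
  constructor
  · -- lower bound : Fstar (x + M) ≤ g x, i.e. 1 - g x ≤ g x * exp (x + M)
    have key : 1 - g x ≤ g x * Real.exp (x + M) := by
      rw [Real.exp_add]
      rcases le_or_gt 0 x with hx | hx
      · have h1 : a * Real.exp (-x) ≤ g x := hlow x hx
        have h2 : a * Real.exp (-x) * (Real.exp x * Real.exp M) = a * Real.exp M := by
          rw [show a * Real.exp (-x) * (Real.exp x * Real.exp M)
            = a * Real.exp M * (Real.exp (-x) * Real.exp x) by ring, hcancel, mul_one]
        have h3 : 1 ≤ a * Real.exp M := by
          rw [hEM, mul_div_assoc']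
          rw [le_div_iff₀ (by positivity)]
          nlinarith [mul_le_mul_of_nonneg_left hAB1 ha0.le,
            mul_le_mul_of_nonneg_left ha'1 ha0.le]
        have h4 := mul_le_mul_of_nonneg_right h1
          (by positivity : (0:ℝ) ≤ Real.exp x * Real.exp M)
        nlinarith [hg1 x]
      · have h1 : 1 - g x ≤ B * Real.exp x := h1up x
        have h2 : a ≤ g x := le_trans (by simpa using hlow 0 le_rfl) (hganti hx.le)
        have hB0 : 0 < B := lt_of_lt_of_le one_pos hB1
        have h3 : B ≤ a * Real.exp M := by
          rw [hEM, mul_div_assoc']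
          rw [le_div_iff₀ (by positivity)]
          nlinarith [mul_le_mul_of_nonneg_left (ha'1.trans hA1) (mul_pos ha0 hB0).le]
        have h4 : B * Real.exp x ≤ g x * (Real.exp x * Real.exp M) := by
          have h5 := mul_le_mul_of_nonneg_right h2
            (by positivity : (0:ℝ) ≤ Real.exp x * Real.exp M)
          nlinarith [mul_le_mul_of_nonneg_right h3 hex.le]
        linarith
    rw [Fstar, div_le_iff₀ (by positivity)]
    nlinarith [hg0 x]
  · -- upper bound : g x ≤ Fstar (x - M), i.e. g x * exp (x - M) ≤ 1 - g x
    have key : g x * Real.exp (x - M) ≤ 1 - g x := by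
      rw [show x - M = x + -M by ring, Real.exp_add]
      rcases le_or_gt x 0 with hx | hx
      · have h1 : a' * Real.exp x ≤ 1 - g x := h1low x hx
        have h3 : Real.exp (-M) ≤ a' := by
          rw [hENM, div_le_iff₀ (by positivity)]
          nlinarith [mul_le_mul_of_nonneg_right ha1 ha'0.le,
            mul_le_mul_of_nonneg_left hAB1 ha'0.le]
        have h4 : g x * (Real.exp x * Real.exp (-M)) ≤ 1 * (Real.exp x * a') := by
          apply mul_le_mul (hg1 x) _ (by positivity) zero_le_one
          exact mul_le_mul_of_nonneg_left h3 hex.le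
        nlinarith
      · have h1 : g x ≤ A * Real.exp (-x) := hup x
        have h2 : a' ≤ 1 - g x := by
          have := hganti hx.le
          have h0 := h1low 0 le_rfl
          simp only [Real.exp_zero, mul_one] at h0
          linarith
        have h5 : A * Real.exp (-x) * (Real.exp x * Real.exp (-M)) = A * Real.exp (-M) := by
          rw [show A * Real.exp (-x) * (Real.exp x * Real.exp (-M))
            = A * Real.exp (-M) * (Real.exp (-x) * Real.exp x) by ring, hcancel, mul_one]
        have h6 : A * Real.exp (-M) ≤ a' := by
          rw [hENM, mul_div_assoc']
          rw [div_le_iff₀ (by positivity)]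
          have hA0 : 0 < A := lt_of_lt_of_le one_pos hA1
          nlinarith [mul_le_mul_of_nonneg_left (ha1.trans hB1) (mul_pos hA0 ha'0).le]
        have h7 := mul_le_mul_of_nonneg_right h1
          (by positivity : (0:ℝ) ≤ Real.exp x * Real.exp (-M))
        nlinarith
    rw [Fstar, le_div_iff₀ (by positivity)]
    nlinarith [hg0 x]

/-- The right tail of the integral tends to 0. -/
lemma tail_small {F : ℝ → ℝ} (hmeas : Measurable F)
    (hint : (∫⁻ u in Ioi (0:ℝ), ENNReal.ofReal (F u)) < ⊤) {ε : ℝ} (hε : 0 < ε) :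
    ∃ N : ℕ, (∫⁻ u in Ioi ((N:ℝ)), ENNReal.ofReal (F u)) ≤ ENNReal.ofReal ε := by
  set ν := volume.withDensity (fun u => ENNReal.ofReal (F u)) with hνdef
  have hν : ∀ a : ℝ, ν (Ioi a) = ∫⁻ u in Ioi a, ENNReal.ofReal (F u) := fun a =>
    withDensity_apply _ measurableSet_Ioi
  have hs : ∀ n : ℕ, NullMeasurableSet (Ioi ((n:ℝ))) ν := fun n =>
    measurableSet_Ioi.nullMeasurableSet
  have hantis : Antitone fun n : ℕ => Ioi ((n:ℝ)) := fun m n hmn =>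
    Ioi_subset_Ioi (by exact_mod_cast hmn)
  have hfin : ∃ n : ℕ, ν (Ioi ((n:ℝ))) ≠ ⊤ :=
    ⟨0, by rw [Nat.cast_zero, hν]; exact hint.ne⟩
  have hiInter : (⋂ n : ℕ, Ioi ((n:ℝ))) = ∅ := by
    ext x
    simp only [mem_iInter, mem_Ioi, mem_empty_iff_false, iff_false]
    push_neg
    obtain ⟨n, hn⟩ := exists_nat_gt x
    exact ⟨n, hn.le⟩
  have htend := tendsto_measure_iInter_atTop hs hantis hfin
  rw [hiInter, measure_empty] at htend
  have hev := htend.eventually_lt_const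
    (show (0:ℝ≥0∞) < ENNReal.ofReal ε from ENNReal.ofReal_pos.2 hε)
  obtain ⟨N, hN⟩ := hev.exists
  exact ⟨N, by rw [← hν]; exact hN.le⟩

theorem hat_T4_bounded (F : ℝ → ℝ) (hmeas : Measurable F) (hanti : Antitone F)
    (hr : ∀ x, F x ∈ Icc (0:ℝ) 1) (hne : ∃ x, F x ≠ 0)
    (hint : (∫⁻ u in Ioi (0:ℝ), ENNReal.ofReal (F u)) < ⊤) :
    ∃ M : ℝ, 0 ≤ M ∧ ∀ x, Fstar (x + M) ≤ Tmap^[4] F x ∧ Tmap^[4] F x ≤ Fstar (x - M) := by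
  obtain ⟨x₀, hx₀⟩ := hne
  set c := F x₀ with hcdef
  have hc0 : 0 < c := lt_of_le_of_ne (hr x₀).1 (Ne.symm hx₀)
  have hFc : ∀ v ≤ x₀, c ≤ F v := fun v hv => hanti hv
  -- Stage 1
  set f₁ := Tmap F with hf₁def
  have h₁le1 : ∀ u, f₁ u ≤ 1 := Tmap_le_one F
  set C₁ := Real.exp (-(c * x₀)) with hC₁def
  have hC₁0 : 0 < C₁ := Real.exp_pos _
  have R1 : ∀ u, f₁ u ≤ C₁ * Real.exp (-(c * u)) := by
    intro u
    calc f₁ u ≤ Real.exp (-(c * (u + x₀))) := Tmap_exp_bound hc0.le hFc u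
      _ = C₁ * Real.exp (-(c * u)) := by rw [hC₁def, ← Real.exp_add]; congr 1; ring
  obtain ⟨N, hN⟩ := tail_small hmeas hint (Real.log_pos one_lt_two)
  have left₁ : ∀ u ≤ -(N:ℝ), (1:ℝ)/2 ≤ f₁ u := by
    intro u hu
    have h1 : Ig F u ≤ ENNReal.ofReal (Real.log 2) := by
      refine le_trans (lintegral_mono_set (Ioi_subset_Ioi (by linarith))) hN
    have h2 := le_Tmap_of_le (Real.log_nonneg one_le_two) h1
    calc (1:ℝ)/2 = Real.exp (-(Real.log 2)) := by
          rw [Real.exp_neg, Real.exp_log two_pos]; norm_num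
      _ ≤ f₁ u := h2
  set K₁ := C₁ / c with hK₁def
  have hK₁0 : 0 ≤ K₁ := by positivity
  have hIf₁ : (∫⁻ u in Ioi (0:ℝ), ENNReal.ofReal (f₁ u)) ≤ ENNReal.ofReal K₁ := by
    have := lint_exp_le hc0 hC₁0.le R1 0
    simpa using this
  -- Stage 2
  set f₂ := Tmap f₁ with hf₂def
  have h₂le1 : ∀ u, f₂ u ≤ 1 := Tmap_le_one f₁
  have rlow₂ : ∀ x, 0 ≤ x → Real.exp (-(x + K₁)) ≤ f₂ x := fun x hx =>
    le_Tmap_of_le (by positivity) (Ig_le_add h₁le1 hK₁0 hIf₁ hx)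
  set C₂ := Real.exp ((N:ℝ) / 2) with hC₂def
  have hC₂1 : 1 ≤ C₂ := Real.one_le_exp (by positivity)
  have R2 : ∀ u, f₂ u ≤ C₂ * Real.exp (-((1:ℝ)/2 * u)) := by
    intro u
    calc f₂ u ≤ Real.exp (-((1:ℝ)/2 * (u + -(N:ℝ)))) := Tmap_exp_bound (by norm_num) left₁ u
      _ = C₂ * Real.exp (-((1:ℝ)/2 * u)) := by rw [hC₂def, ← Real.exp_add]; congr 1; ring
  set D₂ := C₁ / c with hD₂def
  have hD₂0 : 0 < D₂ := by positivity
  have left₂ : ∀ v, 1 - f₂ v ≤ D₂ * Real.exp (c * v) := by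
    intro v
    have h1 : Ig f₁ v ≤ ENNReal.ofReal (C₁ / c * Real.exp (-(c * (-v)))) :=
      lint_exp_le hc0 hC₁0.le R1 (-v)
    have h2 : C₁ / c * Real.exp (-(c * (-v))) = D₂ * Real.exp (c * v) := by
      rw [hD₂def]; congr 2; ring
    exact one_sub_Tmap_le (by positivity) (h2 ▸ h1)
  -- Stage 3
  set f₃ := Tmap f₂ with hf₃def
  set K₂ := C₂ / ((1:ℝ)/2) with hK₂def
  have hK₂0 : 0 < K₂ := by positivity
  have hIf₂ : (∫⁻ u in Ioi (0:ℝ), ENNReal.ofReal (f₂ u)) ≤ ENNReal.ofReal K₂ := by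
    have h0 := lint_exp_le (by norm_num : (0:ℝ) < 1/2) (by positivity : (0:ℝ) ≤ C₂) R2 0
    have h1 : C₂ / ((1:ℝ)/2) * Real.exp (-((1:ℝ)/2 * 0)) = K₂ := by
      rw [hK₂def]; norm_num
    rwa [h1] at h0
  have rlow₃ : ∀ x, 0 ≤ x → Real.exp (-(x + K₂)) ≤ f₃ x := fun x hx =>
    le_Tmap_of_le (by positivity) (Ig_le_add h₂le1 hK₂0.le hIf₂ hx)
  set C₃ := Real.exp (D₂ / c) with hC₃def
  have hC₃1 : 1 ≤ C₃ := Real.one_le_exp (by positivity)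
  have R3 : ∀ x, f₃ x ≤ C₃ * Real.exp (-x) :=
    Tmap_exp_bound_one hc0 hD₂0.le (fun v => by linarith [left₂ v])
  have left₃ : ∀ v, 1 - f₃ v ≤ K₂ * Real.exp ((1:ℝ)/2 * v) := by
    intro v
    have h1 : Ig f₂ v ≤ ENNReal.ofReal (C₂ / ((1:ℝ)/2) * Real.exp (-((1:ℝ)/2 * (-v)))) :=
      lint_exp_le (by norm_num) (by positivity) R2 (-v)
    have h2 : C₂ / ((1:ℝ)/2) * Real.exp (-((1:ℝ)/2 * (-v))) = K₂ * Real.exp ((1:ℝ)/2 * v) := by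
      rw [hK₂def]; congr 2; ring
    exact one_sub_Tmap_le (by positivity) (h2 ▸ h1)
  -- Stage 4
  set f₄ := Tmap f₃ with hf₄def
  have hIf₃ : (∫⁻ u in Ioi (0:ℝ), ENNReal.ofReal (f₃ u)) ≤ ENNReal.ofReal C₃ := by
    have hR3' : ∀ u, f₃ u ≤ C₃ * Real.exp (-((1:ℝ) * u)) := by
      intro u; simpa using R3 u
    have := lint_exp_le one_pos (by positivity : (0:ℝ) ≤ C₃) hR3' 0
    simpa using this
  have rlow₄ : ∀ x, 0 ≤ x → Real.exp (-(x + C₃)) ≤ f₄ x := fun x hx =>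
    le_Tmap_of_le (by positivity) (Ig_le_add (Tmap_le_one f₂) (by positivity) hIf₃ hx)
  set A := Real.exp (K₂ / ((1:ℝ)/2)) with hAdef
  have hA1 : 1 ≤ A := Real.one_le_exp (by positivity)
  have hup : ∀ x, f₄ x ≤ A * Real.exp (-x) :=
    Tmap_exp_bound_one (by norm_num) hK₂0.le (fun v => by linarith [left₃ v])
  have h1up : ∀ v, 1 - f₄ v ≤ C₃ * Real.exp v := by
    intro v
    have hR3' : ∀ u, f₃ u ≤ C₃ * Real.exp (-((1:ℝ) * u)) := by
      intro u; simpa using R3 u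
    have h1 : Ig f₃ v ≤ ENNReal.ofReal (C₃ / 1 * Real.exp (-((1:ℝ) * (-v)))) :=
      lint_exp_le one_pos (by positivity) hR3' (-v)
    have h2 : C₃ / 1 * Real.exp (-((1:ℝ) * (-v))) = C₃ * Real.exp v := by
      congr 1 <;> [ring; (congr 1; ring)]
    exact one_sub_Tmap_le (by positivity) (h2 ▸ h1)
  set a' := Real.exp (-K₂) * Real.exp (-C₃) with ha'def
  have ha'0 : 0 < a' := by positivity
  have ha'1 : a' ≤ 1 := by
    rw [ha'def, ← Real.exp_add]
    refine Real.exp_le_one_iff.2 (by nlinarith)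
  have h1low : ∀ v ≤ 0, a' * Real.exp v ≤ 1 - f₄ v := by
    intro v hv
    have hL : ENNReal.ofReal (Real.exp (-K₂) * Real.exp (-(-v))) ≤ Ig f₃ v := by
      refine lint_exp_ge (by positivity) ?_
      intro u hu
      have hu0 : 0 ≤ u := le_trans (by linarith) (le_of_lt hu)
      have := rlow₃ u hu0
      calc Real.exp (-K₂) * Real.exp (-u) = Real.exp (-(u + K₂)) := by
            rw [← Real.exp_add]; congr 1; ring
        _ ≤ f₃ u := this
    have hB : Ig f₃ v ≤ ENNReal.ofReal C₃ := by
      have hmono : Ig f₃ v ≤ Ig f₃ 0 := Ig_mono f₃ hv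
      have h0 : Ig f₃ 0 = ∫⁻ u in Ioi (0:ℝ), ENNReal.ofReal (f₃ u) := by
        rw [Ig, neg_zero]
      exact h0 ▸ hmono |>.trans hIf₃
    have := le_one_sub_Tmap (by positivity) (by positivity) hL hB
    calc a' * Real.exp v = Real.exp (-K₂) * Real.exp (-(-v)) * Real.exp (-C₃) := by
          rw [ha'def]; ring_nf
      _ ≤ 1 - f₄ v := this
  set a := Real.exp (-C₃) with hadef
  have ha0 : 0 < a := Real.exp_pos _
  have ha1 : a ≤ 1 := Real.exp_le_one_iff.2 (by linarith)
  have hlow : ∀ x, 0 ≤ x → a * Real.exp (-x) ≤ f₄ x := by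
    intro x hx
    calc a * Real.exp (-x) = Real.exp (-(x + C₃)) := by
          rw [hadef, ← Real.exp_add]; congr 1; ring
      _ ≤ f₄ x := rlow₄ x hx
  have hanti₄ : Antitone f₄ := Tmap_anti f₃
  have h₄0 : ∀ x, 0 ≤ f₄ x := Tmap_nonneg f₃
  have h₄1 : ∀ x, f₄ x ≤ 1 := Tmap_le_one f₃
  have g0low : a ≤ f₄ 0 := by simpa using hlow 0 le_rfl
  have g0up : a' ≤ 1 - f₄ 0 := by simpa using h1low 0 le_rfl
  -- iterate
  have hiter : Tmap^[4] F = f₄ := by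
    rw [hf₄def, hf₃def, hf₂def, hf₁def]
    rfl
  obtain ⟨M, hM0, hM⟩ := final_combine hA1 hC₃1 ha0 ha1 ha'0 ha'1 h₄0 h₄1 hanti₄
    hup hlow h1up h1low
  exact ⟨M, hM0, fun x => by rw [hiter]; exact hM x⟩
end

section
/- Asymptotics of one application of T: let F : ℝ → [0,1] be non-increasing, not identically 0, with ∫_0^∞ F < ∞. Then there exist α, β > 0 such that TF(x) = O(e^{-αx}) and TF(x) = Ω(e^{-βx}) as x → +∞, and TF(x) = 1 - Θ(∫_{-x}^∞ F) as x → -∞, where (TF)(x) = exp(-∫_{-x}^∞ F(u) du). -/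
open MeasureTheory Set Filter

theorem Tmap_asymptotics (F : ℝ → ℝ) (hmeas : Measurable F) (hanti : Antitone F)
    (hr : ∀ x, F x ∈ Icc (0:ℝ) 1) (hne : ∃ x, F x ≠ 0)
    (hint : (∫⁻ u in Ioi (0:ℝ), ENNReal.ofReal (F u)) < ⊤) :
    (∃ α > (0:ℝ), ∃ β > (0:ℝ),
      (Tmap F) =O[atTop] (fun x => Real.exp (-α * x)) ∧
      (fun x => Real.exp (-β * x)) =O[atTop] (Tmap F)) ∧
    (fun x => 1 - Tmap F x) =Θ[atBot]
      (fun x => ((∫⁻ u in Ioi (-x), ENNReal.ofReal (F u)).toReal)) := by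
  set G : ℝ → ENNReal := fun x => ∫⁻ u in Ioi (-x), ENNReal.ofReal (F u) with hG
  have hF0 : ∀ u, 0 ≤ F u := fun u => (hr u).1
  have hF1 : ∀ u, F u ≤ 1 := fun u => (hr u).2
  -- finiteness of G
  have hfin : ∀ x, G x ≠ ⊤ := by
    intro x
    have hsub : Ioi (-x) ⊆ Ioc (-x) 0 ∪ Ioi 0 := by
      intro u hu
      rcases le_or_gt u 0 with h | h
      · exact Or.inl ⟨hu, h⟩
      · exact Or.inr h
    have h1 : G x ≤ (∫⁻ u in Ioc (-x) 0, ENNReal.ofReal (F u))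
        + ∫⁻ u in Ioi (0:ℝ), ENNReal.ofReal (F u) := by
      refine le_trans (lintegral_mono_set hsub) (lintegral_union_le _ _ _)
    have h2 : (∫⁻ u in Ioc (-x) 0, ENNReal.ofReal (F u)) ≤ volume (Ioc (-x) 0) := by
      calc (∫⁻ u in Ioc (-x) 0, ENNReal.ofReal (F u))
          ≤ ∫⁻ _ in Ioc (-x) 0, 1 := by
            refine lintegral_mono fun u => ?_
            exact ENNReal.ofReal_le_one.2 (hF1 u)
        _ = volume (Ioc (-x) 0) := setLIntegral_one _
    refine ne_top_of_le_ne_top ?_ h1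
    exact ENNReal.add_ne_top.2 ⟨ne_top_of_le_ne_top (by simp [Real.volume_Ioc]) h2, hint.ne⟩
  have hTmap : ∀ x, Tmap F x = Real.exp (-(G x).toReal) := by
    intro x; simp only [Tmap, hG]; rw [if_neg (hfin x)]
  set g : ℝ → ℝ := fun x => (G x).toReal with hg
  have hg0 : ∀ x, 0 ≤ g x := fun x => ENNReal.toReal_nonneg
  have hgmono : Monotone g := by
    intro x y hxy
    refine ENNReal.toReal_mono (hfin y) (lintegral_mono_set ?_)
    exact Ioi_subset_Ioi (neg_le_neg hxy)
  constructor
  · -- atTop part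
    obtain ⟨x0, hx0⟩ := hne
    have hc : 0 < F x0 := lt_of_le_of_ne (hF0 x0) (Ne.symm hx0)
    set c := F x0 with hcdef
    refine ⟨c, hc, 1, one_pos, ?_, ?_⟩
    · -- Tmap F =O exp(-c x)
      refine Asymptotics.IsBigO.of_bound (Real.exp (-(c * x0))) ?_
      filter_upwards [eventually_ge_atTop (-x0)] with x hx
      have hlow : c * (x0 + x) ≤ g x := by
        have hA : ENNReal.ofReal c * ENNReal.ofReal (x0 + x) ≤ G x := by
          calc ENNReal.ofReal c * ENNReal.ofReal (x0 + x)
              = ENNReal.ofReal c * volume (Ioc (-x) x0) := by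
                rw [Real.volume_Ioc]; ring_nf
            _ = ∫⁻ _ in Ioc (-x) x0, ENNReal.ofReal c := (setLIntegral_const _ _).symm
            _ ≤ ∫⁻ u in Ioc (-x) x0, ENNReal.ofReal (F u) := by
                refine setLIntegral_mono (hmeas.ennreal_ofReal) fun u hu => ?_
                exact ENNReal.ofReal_le_ofReal (hanti hu.2)
            _ ≤ G x := lintegral_mono_set Ioc_subset_Ioi_self
        have := ENNReal.toReal_mono (hfin x) hA
        rwa [ENNReal.toReal_mul, ENNReal.toReal_ofReal hc.le,
          ENNReal.toReal_ofReal (by linarith)] at this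
      rw [hTmap x]
      rw [Real.norm_eq_abs, Real.norm_eq_abs, abs_of_pos (Real.exp_pos _),
        abs_of_pos (Real.exp_pos _), ← Real.exp_add]
      exact Real.exp_le_exp.2 (by nlinarith)
    · -- exp(-x) =O Tmap F
      refine Asymptotics.IsBigO.of_bound (Real.exp ((∫⁻ u in Ioi (0:ℝ),
        ENNReal.ofReal (F u)).toReal)) ?_
      filter_upwards [eventually_ge_atTop (0:ℝ)] with x hx
      set C := (∫⁻ u in Ioi (0:ℝ), ENNReal.ofReal (F u)).toReal with hC
      have hup : g x ≤ x + C := by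
        have hsub : Ioi (-x) ⊆ Ioc (-x) 0 ∪ Ioi 0 := by
          intro u hu
          rcases le_or_gt u 0 with h | h
          · exact Or.inl ⟨hu, h⟩
          · exact Or.inr h
        have h1 : G x ≤ ENNReal.ofReal x + ∫⁻ u in Ioi (0:ℝ), ENNReal.ofReal (F u) := by
          refine le_trans (lintegral_mono_set hsub)
            (le_trans (lintegral_union_le _ _ _) ?_)
          gcongr
          calc (∫⁻ u in Ioc (-x) 0, ENNReal.ofReal (F u))
              ≤ ∫⁻ _ in Ioc (-x) 0, 1 := lintegral_mono fun u =>
                ENNReal.ofReal_le_one.2 (hF1 u)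
            _ = volume (Ioc (-x) 0) := setLIntegral_one _
            _ = ENNReal.ofReal x := by rw [Real.volume_Ioc]; ring_nf
        have h2 := ENNReal.toReal_mono (ENNReal.add_ne_top.2
          ⟨ENNReal.ofReal_ne_top, hint.ne⟩) h1
        rwa [ENNReal.toReal_add ENNReal.ofReal_ne_top hint.ne,
          ENNReal.toReal_ofReal hx] at h2
      rw [hTmap x]
      rw [Real.norm_eq_abs, Real.norm_eq_abs, abs_of_pos (Real.exp_pos _),
        abs_of_pos (Real.exp_pos _), ← Real.exp_add]
      exact Real.exp_le_exp.2 (by nlinarith)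
  · -- atBot part
    set M := g 0 with hM
    constructor
    · refine Asymptotics.IsBigO.of_bound 1 ?_
      filter_upwards with x
      have h1 : 1 - Real.exp (-g x) ≤ g x := by
        have := Real.add_one_le_exp (-g x)
        linarith
      have h2 : 0 ≤ 1 - Real.exp (-g x) := by
        have : Real.exp (-g x) ≤ 1 := Real.exp_le_one_iff.2 (by linarith [hg0 x])
        linarith
      rw [hTmap x, Real.norm_eq_abs, Real.norm_eq_abs, abs_of_nonneg h2,
        abs_of_nonneg (hg0 x)]
      linarith
    · refine Asymptotics.IsBigO.of_bound (Real.exp M) ?_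
      filter_upwards [eventually_le_atBot (0:ℝ)] with x hx
      have hgM : g x ≤ M := hgmono hx
      have h1 : g x * Real.exp (-g x) ≤ 1 - Real.exp (-g x) := by
        have h := Real.add_one_le_exp (g x)
        have key := mul_le_mul_of_nonneg_right h (Real.exp_pos (-g x)).le
        rw [← Real.exp_add, add_neg_cancel, Real.exp_zero] at key
        nlinarith [key]
      have h2 : g x * Real.exp (-M) ≤ g x * Real.exp (-g x) :=
        mul_le_mul_of_nonneg_left (Real.exp_le_exp.2 (by linarith)) (hg0 x)
      have h3 : 0 ≤ 1 - Real.exp (-g x) := by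
        have : Real.exp (-g x) ≤ 1 := Real.exp_le_one_iff.2 (by linarith [hg0 x])
        linarith
      rw [hTmap x, Real.norm_eq_abs, Real.norm_eq_abs, abs_of_nonneg (hg0 x),
        abs_of_nonneg h3]
      have hexp : Real.exp M * Real.exp (-M) = 1 := by
        rw [← Real.exp_add]; simp
      nlinarith [Real.exp_pos M, Real.exp_pos (-M)]
end
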